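/- There is no linear (or more generally, unitary) map U on ℂ² ⊗ ℂ² satisfying U(|ψ⟩ ⊗ |0⟩) = |ψ⟩ ⊗ |ψ⟩ for all unit vectors |ψ⟩ ∈ ℂ². (No-cloning theorem.) -/
import Mathlib


open scoped TensorProduct

noncomputable def ncφ : (EuclideanSpace ℂ (Fin 2) ⊗[ℂ] EuclideanSpace ℂ (Fin 2)) →ₗ[ℂ] ℂ :=
  (TensorProduct.lid ℂ ℂ).toLinearMap ∘ₗ
    TensorProduct.map (EuclideanSpace.projₗ 0) (EuclideanSpace.projₗ 1)

lemma ncφ_tmul (x y : EuclideanSpace ℂ (Fin 2)) : ncφ (x ⊗ₜ[ℂ] y) = x 0 * y 1 := by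
  simp [ncφ, mul_comm]

/-- no-cloning theorem: there is no linear map `U` on `ℂ² ⊗ ℂ²`
satisfying `U(|ψ⟩ ⊗ |0⟩) = |ψ⟩ ⊗ |ψ⟩` for every unit vector `|ψ⟩ ∈ ℂ²`. -/
theorem no_cloning :
    ¬ ∃ U : (EuclideanSpace ℂ (Fin 2) ⊗[ℂ] EuclideanSpace ℂ (Fin 2)) →ₗ[ℂ]
        (EuclideanSpace ℂ (Fin 2) ⊗[ℂ] EuclideanSpace ℂ (Fin 2)),
      ∀ ψ : EuclideanSpace ℂ (Fin 2), ‖ψ‖ = 1 →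
        U (ψ ⊗ₜ[ℂ] (EuclideanSpace.single 0 1)) = ψ ⊗ₜ[ℂ] ψ := by
  rintro ⟨U, hU⟩
  set e0 : EuclideanSpace ℂ (Fin 2) := EuclideanSpace.single 0 1 with he0
  set e1 : EuclideanSpace ℂ (Fin 2) := EuclideanSpace.single 1 1 with he1
  have h0 : ‖e0‖ = 1 := by simp [he0]
  have h1 : ‖e1‖ = 1 := by simp [he1]
  set c : ℂ := (Real.sqrt 2 : ℂ)⁻¹ with hc
  have hplus : ‖c • (e0 + e1)‖ = 1 := by
    have hsum : ‖e0 + e1‖ = Real.sqrt 2 := by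
      rw [EuclideanSpace.norm_eq]
      congr 1
      rw [Fin.sum_univ_two]
      simp [he0, he1, EuclideanSpace.single_apply]
      norm_num
    rw [norm_smul, hsum]
    rw [hc]
    simp
    rw [abs_of_nonneg (by positivity)]
    rw [inv_mul_cancel₀ (by positivity)]
  have hlin : U ((c • (e0 + e1)) ⊗ₜ[ℂ] e0)
      = c • (e0 ⊗ₜ[ℂ] e0) + c • (e1 ⊗ₜ[ℂ] e1) := by
    rw [TensorProduct.smul_tmul, TensorProduct.tmul_smul, map_smul,
      TensorProduct.add_tmul, map_add, hU e0 h0, hU e1 h1, smul_add]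
  have heq := hU _ hplus
  rw [hlin] at heq
  have key := congrArg ncφ heq
  simp only [map_add, map_smul, ncφ_tmul, smul_eq_mul] at key
  have h00 : e0 0 = 1 := by simp [he0, EuclideanSpace.single_apply]
  have h01 : e0 1 = 0 := by simp [he0, EuclideanSpace.single_apply]
  have h10 : e1 0 = 0 := by simp [he1, EuclideanSpace.single_apply]
  have h11 : e1 1 = 1 := by simp [he1, EuclideanSpace.single_apply]
  have hs0 : (c • (e0 + e1)) 0 = c := by
    simp [PiLp.smul_apply, PiLp.add_apply, h00, h10]
  have hs1 : (c • (e0 + e1)) 1 = c := by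
    simp [PiLp.smul_apply, PiLp.add_apply, h01, h11]
  rw [h00, h01, h10, h11, hs0, hs1] at key
  have hc0 : c ≠ 0 := by
    rw [hc]
    simp [Real.sqrt_eq_zero']
  have hcc : c * c = 0 := by linear_combination -key
  exact hc0 (mul_self_eq_zero.mp hcc)
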